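/- Let F be the free group on generators x₀, …, x_{n-1} (n ≥ 1), and let S be the subgroup generated by x₀, …, x_{n-2}. If an element w of F does not belong to S, then for every nonzero integer k the power w^k does not belong to S. -/

import Mathlib

namespace ZpowAux

open FreeGroup List

variable {α : Type*} [DecidableEq α]

/-- The "no cancellation" relation between adjacent letters. -/
def NC (a b : α × Bool) : Prop := ¬(a.1 = b.1 ∧ a.2 = !b.2)

theorem reduce_eq_self_of_chain : ∀ {L : List (α × Bool)}, List.Chain' NC L → reduce L = L := by
  intro L hL
  induction L with
  | nil => rfl
  | cons x L ih =>
    have hL' : List.Chain' NC L := hL.tail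
    rw [reduce.cons, ih hL']
    cases L with
    | nil => rfl
    | cons hd tl =>
      have hR : NC x hd := (List.isChain_cons_cons.mp hL).1
      simp only [NC] at hR
      simp [hR]

theorem chain_of_reduce_eq_self : ∀ {L : List (α × Bool)}, reduce L = L → List.Chain' NC L := by
  intro L
  induction L with
  | nil => intro _; exact List.isChain_nil
  | cons x L ih =>
    intro h
    rw [reduce.cons] at h
    rcases hred : reduce L with _ | ⟨hd, tl⟩
    · rw [hred] at h
      change [x] = x :: L at h
      have hL : L = [] := by injection h with _ h2; exact h2.symm
      subst hL
      exact List.isChain_singleton x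
    · rw [hred] at h
      change (if x.1 = hd.1 ∧ x.2 = !hd.2 then tl else x :: hd :: tl) = x :: L at h
      by_cases hc : x.1 = hd.1 ∧ x.2 = !hd.2
      · exfalso
        rw [if_pos hc] at h
        have hle : (reduce L).length ≤ L.length := FreeGroup.Red.length_le (FreeGroup.reduce.red)
        rw [hred] at hle
        have hlen := congrArg List.length h
        simp only [List.length_cons] at hlen hle
        omega
      · rw [if_neg hc] at h
        have hLeq : L = hd :: tl := by injection h with _ h2; exact h2.symm
        have : reduce L = L := by rw [hred, hLeq]
        have hchain := ih this
        rw [hLeq]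
        exact List.isChain_cons_cons.mpr ⟨hc, hLeq ▸ hchain⟩

theorem chain_toWord (w : FreeGroup α) : List.Chain' NC w.toWord :=
  chain_of_reduce_eq_self (FreeGroup.reduce_toWord w)

theorem invRev_cons (x : α × Bool) (L : List (α × Bool)) :
    invRev (x :: L) = invRev L ++ [(x.1, !x.2)] := by
  simp [invRev]

/-- Cyclic decomposition of a reduced word. -/
theorem cyclic_decomp : ∀ (N : ℕ) (L : List (α × Bool)), L.length ≤ N → List.Chain' NC L →
    ∃ A V : List (α × Bool), L = A ++ V ++ invRev A ∧
      (∀ a ∈ V.getLast?, ∀ b ∈ V.head?, NC a b) := by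
  intro N
  induction N with
  | zero =>
    intro L hlen _
    have : L = [] := List.length_eq_zero_iff.mp (Nat.le_zero.mp hlen)
    subst this
    exact ⟨[], [], by simp [invRev], by simp⟩
  | succ N ih =>
    intro L hlen hL
    by_cases hcyc : ∀ a ∈ L.getLast?, ∀ b ∈ L.head?, NC a b
    · exact ⟨[], L, by simp [invRev], hcyc⟩
    · push_neg at hcyc
      obtain ⟨a, ha, b, hb, hab⟩ := hcyc
      simp only [NC, not_not] at hab
      -- L is nonempty, with head b and last a, and they cancel
      cases L with
      | nil => simp at hb
      | cons b' L' =>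
        have hb' : b' = b := by simpa using hb
        subst hb'
        rcases List.eq_nil_or_concat L' with rfl | ⟨M, a', rfl⟩
        · -- singleton: a = b, contradiction with a.2 = !b.2
          have hab' : b' = a := by simpa using ha
          subst hab'
          simp at hab
        · simp only [List.concat_eq_append] at hlen hL ha ⊢
          have hgl : (b' :: (M ++ [a'])).getLast? = some a' := by
            rw [show b' :: (M ++ [a']) = (b' :: M) ++ [a'] from rfl, List.getLast?_concat]
          have ha' : a' = a := by
            rw [hgl] at ha
            exact Option.mem_some_iff.mp ha
          subst ha'
          -- b' = (a'.1, !a'.2)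
          have hbval : b' = (a'.1, !a'.2) := by
            obtain ⟨h1, h2⟩ := hab
            have : b'.2 = !a'.2 := by
              cases hb2 : b'.2 <;> cases ha2 : a'.2 <;> simp_all
            exact Prod.ext h1.symm this
          have hMchain : List.Chain' NC M := by
            have h1 : List.Chain' NC (M ++ [a']) := hL.tail
            exact (List.isChain_append.mp h1).1
          have hMlen : M.length ≤ N := by
            simp only [List.length_cons, List.length_append, List.length_singleton] at hlen
            omega
          obtain ⟨A', V, hdecomp, hcond⟩ := ih M hMlen hMchain
          refine ⟨b' :: A', V, ?_, hcond⟩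
          rw [invRev_cons, hdecomp]
          have : (b'.1, !b'.2) = a' := by
            rw [hbval]; simp
          rw [this]
          simp [List.append_assoc]

theorem mk_flatten_replicate (m : ℕ) (V : List (α × Bool)) :
    FreeGroup.mk ((List.replicate m V).flatten) = (FreeGroup.mk V) ^ m := by
  induction m with
  | zero => simp [FreeGroup.one_eq_mk]
  | succ m ih =>
    rw [List.replicate_succ, List.flatten_cons, ← FreeGroup.mul_mk, ih, pow_succ']

theorem flatten_replicate_head (m : ℕ) (hm : m ≠ 0) (V : List (α × Bool)) (hV : V ≠ []) :
    ((List.replicate m V).flatten).head? = V.head? := by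
  cases m with
  | zero => exact absurd rfl hm
  | succ m =>
    rw [List.replicate_succ, List.flatten_cons, List.head?_append_of_ne_nil _ hV]

theorem flatten_replicate_getLast (m : ℕ) (hm : m ≠ 0) (V : List (α × Bool)) (hV : V ≠ []) :
    ((List.replicate m V).flatten).getLast? = V.getLast? := by
  cases m with
  | zero => exact absurd rfl hm
  | succ m =>
    rw [List.replicate_succ', List.flatten_append, List.flatten_cons, List.flatten_nil,
      List.append_nil, List.getLast?_append_of_ne_nil _ hV]

theorem chain_flatten_replicate (m : ℕ) (V : List (α × Bool)) (hV : List.Chain' NC V)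
    (hcyc : ∀ a ∈ V.getLast?, ∀ b ∈ V.head?, NC a b) :
    List.Chain' NC ((List.replicate m V).flatten) := by
  induction m with
  | zero => exact List.isChain_nil
  | succ m ih =>
    rw [List.replicate_succ, List.flatten_cons]
    unfold List.Chain'
    rw [List.isChain_append]
    refine ⟨hV, ih, ?_⟩
    intro a ha b hb
    cases m with
    | zero => simp at hb
    | succ m =>
      rw [flatten_replicate_head (m+1) (by omega) V] at hb
      · exact hcyc a ha b hb
      · intro h; subst h; simp at hb

/-- Letters of a word persist in its powers. -/
theorem mem_toWord_pow (w : FreeGroup α) (m : ℕ) (hm : m ≠ 0)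
    (x : α × Bool) (hx : x ∈ w.toWord) : x ∈ (w ^ m).toWord := by
  obtain ⟨A, V, hdecomp, hcyc⟩ :=
    cyclic_decomp w.toWord.length w.toWord le_rfl (chain_toWord w)
  have hw : w = FreeGroup.mk A * FreeGroup.mk V * (FreeGroup.mk A)⁻¹ := by
    rw [FreeGroup.inv_mk, FreeGroup.mul_mk, FreeGroup.mul_mk, ← hdecomp, FreeGroup.mk_toWord]
  by_cases hV : V = []
  · subst hV
    have : w = 1 := by
      rw [hw, ← FreeGroup.one_eq_mk, mul_one, mul_inv_cancel]
    rw [this] at hx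
    simp [FreeGroup.toWord_one] at hx
  · -- the chain structure of the original word
    have hchainL : List.Chain' NC (A ++ V ++ invRev A) := hdecomp ▸ chain_toWord w
    unfold List.Chain' at hchainL
    rw [List.append_assoc, List.isChain_append] at hchainL
    obtain ⟨hchainA, hchainVB, hjunc1⟩ := hchainL
    rw [List.isChain_append] at hchainVB
    obtain ⟨hchainV, hchainB, hjunc2⟩ := hchainVB
    set C := (List.replicate m V).flatten with hC
    have hCne : C ≠ [] := by
      cases m with
      | zero => exact absurd rfl hm
      | succ m =>
        rw [hC, List.replicate_succ, List.flatten_cons]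
        simp [hV]
    have hCchain : List.Chain' NC C := chain_flatten_replicate m V hchainV hcyc
    have hChead : C.head? = V.head? := flatten_replicate_head m hm V hV
    have hClast : C.getLast? = V.getLast? := flatten_replicate_getLast m hm V hV
    have hchainNew : List.Chain' NC (A ++ (C ++ invRev A)) := by
      unfold List.Chain'
      rw [List.isChain_append]
      refine ⟨hchainA, ?_, ?_⟩
      · rw [List.isChain_append]
        refine ⟨hCchain, hchainB, ?_⟩
        intro a ha b hb
        rw [hClast] at ha
        exact hjunc2 a ha b hb
      · intro a ha b hb
        rw [List.head?_append_of_ne_nil _ hCne, hChead] at hb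
        apply hjunc1 a ha b
        rw [List.head?_append_of_ne_nil _ hV]
        exact hb
    have hpow : w ^ m = FreeGroup.mk (A ++ (C ++ invRev A)) := by
      rw [hw, conj_pow, ← mk_flatten_replicate, ← hC, FreeGroup.inv_mk,
        FreeGroup.mul_mk, FreeGroup.mul_mk, List.append_assoc]
    have htw : (w ^ m).toWord = A ++ (C ++ invRev A) := by
      rw [hpow, FreeGroup.toWord_mk, reduce_eq_self_of_chain hchainNew]
    rw [htw]
    rw [hdecomp] at hx
    simp only [List.mem_append] at hx ⊢
    rcases hx with (hx | hx) | hx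
    · exact Or.inl hx
    · refine Or.inr (Or.inl ?_)
      cases m with
      | zero => exact absurd rfl hm
      | succ m =>
        rw [hC, List.replicate_succ, List.flatten_cons]
        exact List.mem_append_left _ hx
    · exact Or.inr (Or.inr hx)

section Closure

variable (s : Set α) [DecidablePred (· ∈ s)]

/-- The retraction killing generators outside `s`. -/
noncomputable def retr : FreeGroup α →* FreeGroup α :=
  FreeGroup.lift (fun i => if i ∈ s then FreeGroup.of i else 1)

theorem mk_singleton_true (a : α) : FreeGroup.mk [(a, true)] = FreeGroup.of a := rfl

theorem mk_singleton_false (a : α) : FreeGroup.mk [(a, false)] = (FreeGroup.of a)⁻¹ := by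
  rw [← mk_singleton_true, FreeGroup.inv_mk]
  rfl

theorem mem_closure_of_letters (L : List (α × Bool)) (h : ∀ a ∈ L, a.1 ∈ s) :
    FreeGroup.mk L ∈ Subgroup.closure (FreeGroup.of '' s) := by
  induction L with
  | nil => exact (FreeGroup.one_eq_mk ▸ Subgroup.one_mem _ : _)
  | cons x L ih =>
    have hx : FreeGroup.mk (x :: L) = FreeGroup.mk [x] * FreeGroup.mk L := by
      rw [FreeGroup.mul_mk]; rfl
    rw [hx]
    refine Subgroup.mul_mem _ ?_ (ih fun a ha => h a (List.mem_cons_of_mem _ ha))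
    have hofmem : FreeGroup.of x.1 ∈ Subgroup.closure (FreeGroup.of '' s) :=
      Subgroup.subset_closure ⟨x.1, h x List.mem_cons_self, rfl⟩
    obtain ⟨a, b⟩ := x
    cases b
    · rw [mk_singleton_false]
      exact Subgroup.inv_mem _ hofmem
    · rw [mk_singleton_true]
      exact hofmem

theorem retr_fix (w : FreeGroup α) (h : w ∈ Subgroup.closure (FreeGroup.of '' s)) :
    retr s w = w := by
  induction h using Subgroup.closure_induction with
  | mem x hx =>
    obtain ⟨i, hi, rfl⟩ := hx
    simp [retr, FreeGroup.lift_apply_of, if_pos hi]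
  | one => exact _root_.map_one _
  | mul x y _ _ hx hy => rw [_root_.map_mul, hx, hy]
  | inv x _ hx => rw [_root_.map_inv, hx]

theorem retr_mk (L : List (α × Bool)) :
    retr s (FreeGroup.mk L) = FreeGroup.mk (L.filter fun a => decide (a.1 ∈ s)) := by
  induction L with
  | nil => simp [FreeGroup.one_eq_mk.symm]
  | cons x L ih =>
    have hx : FreeGroup.mk (x :: L) = FreeGroup.mk [x] * FreeGroup.mk L := by
      rw [FreeGroup.mul_mk]; rfl
    rw [hx, _root_.map_mul, ih]
    obtain ⟨a, b⟩ := x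
    by_cases ha : a ∈ s
    · have h1 : retr s (FreeGroup.mk [(a, b)]) = FreeGroup.mk [(a, b)] := by
        cases b
        · rw [mk_singleton_false, _root_.map_inv, retr, FreeGroup.lift_apply_of, if_pos ha,
            ← mk_singleton_false]
        · rw [mk_singleton_true, retr, FreeGroup.lift_apply_of, if_pos ha]
      rw [h1, FreeGroup.mul_mk]
      congr 1
      rw [List.filter_cons]
      simp [ha]
    · have h1 : retr s (FreeGroup.mk [(a, b)]) = 1 := by
        cases b
        · rw [mk_singleton_false, _root_.map_inv, retr, FreeGroup.lift_apply_of, if_neg ha, inv_one]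
        · rw [mk_singleton_true, retr, FreeGroup.lift_apply_of, if_neg ha]
      rw [h1, one_mul, List.filter_cons]
      simp [ha]

theorem letters_of_mem_closure (w : FreeGroup α)
    (h : w ∈ Subgroup.closure (FreeGroup.of '' s)) :
    ∀ a ∈ w.toWord, a.1 ∈ s := by
  intro a ha
  have h1 : retr s w = w := retr_fix s w h
  have h2 : w = FreeGroup.mk ((w.toWord).filter fun a => decide (a.1 ∈ s)) := by
    conv_lhs => rw [← h1, ← FreeGroup.mk_toWord (x := w)]
    exact retr_mk s w.toWord
  have h3 : w.toWord = reduce ((w.toWord).filter fun a => decide (a.1 ∈ s)) := by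
    conv_lhs => rw [h2]
    rw [FreeGroup.toWord_mk]
  have h4 : w.toWord <+ (w.toWord).filter fun a => decide (a.1 ∈ s) := by
    have h5 : reduce ((w.toWord).filter fun a => decide (a.1 ∈ s)) <+
        (w.toWord).filter fun a => decide (a.1 ∈ s) :=
      FreeGroup.Red.sublist FreeGroup.reduce.red
    rwa [← h3] at h5
  have := h4.subset ha
  simp only [List.mem_filter, decide_eq_true_eq] at this
  exact this.2

end Closure

end ZpowAux

/-- In the free group on `n ≥ 1` generators, if a word `w` lies outside the subgroup
generated by the first `n - 1` generators, then so does `w ^ k` for every `k ≠ 0`. -/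
theorem zpow_not_mem_closure_init
    {n : ℕ} (hn : 1 ≤ n)
    (S : Subgroup (FreeGroup (Fin n)))
    (hS : S = Subgroup.closure (FreeGroup.of '' {i : Fin n | (i : ℕ) < n - 1}))
    (w : FreeGroup (Fin n)) (hw : w ∉ S) :
    ∀ k : ℤ, k ≠ 0 → w ^ k ∉ S := by
  subst hS
  intro k hk hmem
  set s : Set (Fin n) := {i : Fin n | (i : ℕ) < n - 1} with hs
  haveI : DecidablePred (· ∈ s) := fun i => by
    simp only [hs, Set.mem_setOf_eq]; infer_instance
  set m : ℕ := k.natAbs with hm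
  have hm0 : m ≠ 0 := Int.natAbs_ne_zero.mpr hk
  have hpowmem : w ^ m ∈ Subgroup.closure (FreeGroup.of '' s) := by
    have : w ^ (m : ℤ) ∈ Subgroup.closure (FreeGroup.of '' s) := by
      rcases Int.natAbs_eq k with h | h
      · rw [← h]; exact hmem
      · have : (m : ℤ) = -k := by omega
        rw [this, zpow_neg]
        exact Subgroup.inv_mem _ hmem
    rwa [zpow_natCast] at this
  -- w has a letter outside s
  have hex : ∃ a ∈ w.toWord, a.1 ∉ s := by
    by_contra hcon
    push_neg at hcon
    apply hw
    rw [← FreeGroup.mk_toWord (x := w)]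
    exact ZpowAux.mem_closure_of_letters s w.toWord hcon
  obtain ⟨a, ha, hans⟩ := hex
  have hmempow : a ∈ (w ^ m).toWord := ZpowAux.mem_toWord_pow w m hm0 a ha
  exact hans (ZpowAux.letters_of_mem_closure s (w ^ m) hpowmem a hmempow)
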